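/- Let m ≥ 1, τ ≥ 0, let x : Fin m → ℝ, and set δ_i = max_j x_j − x_i for each i. Suppose c > 0 is such that for every i, either δ_i = 0 or δ_i ≥ c. Then max_i x_i − g_x(τ) ≤ exp(−τ·c) · ∑_i δ_i. In particular, the gap between max and the softmax-weighted value decays exponentially fast in τ. -/
import Mathlib


/-- The softmax-weighted value `g_x(τ) = (∑ i, exp(τ·x_i)·x_i) / (∑ i, exp(τ·x_i))`. -/
noncomputable def gval {m : ℕ} (x : Fin m → ℝ) (τ : ℝ) : ℝ :=
  (∑ i, Real.exp (τ * x i) * x i) / (∑ i, Real.exp (τ * x i))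

/-- The maximum coordinate of `x : Fin m → ℝ`, for `m ≥ 1`. -/
noncomputable def maxVal {m : ℕ} (hm : 1 ≤ m) (x : Fin m → ℝ) : ℝ :=
  Finset.univ.sup' ⟨⟨0, hm⟩, Finset.mem_univ _⟩ x

/-- If every gap `δ_i = max_j x_j − x_i` is either `0` or at least `c > 0`, then
`max_i x_i − g_x(τ) ≤ exp(−τ·c) · ∑ i, δ_i`: the max–softmax gap decays
exponentially fast in `τ`. -/
theorem max_sub_softmax_le_exp_neg_tau_mul
    {m : ℕ} (hm : 1 ≤ m) (τ : ℝ) (hτ : 0 ≤ τ) (x : Fin m → ℝ)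
    (c : ℝ) (hc : 0 < c)
    (hgap : ∀ i, maxVal hm x - x i = 0 ∨ c ≤ maxVal hm x - x i) :
    maxVal hm x - gval x τ ≤
      Real.exp (-(τ * c)) * ∑ i, (maxVal hm x - x i) := by
  set M := maxVal hm x with hM
  have hS : 0 < ∑ i, Real.exp (τ * x i) :=
    Finset.sum_pos (fun i _ => Real.exp_pos _) ⟨⟨0, hm⟩, Finset.mem_univ _⟩
  have hle : ∀ i, x i ≤ M := fun i => Finset.le_sup' x (Finset.mem_univ i)
  have hδ : ∀ i, (0:ℝ) ≤ M - x i := fun i => sub_nonneg.mpr (hle i)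
  have hsumδ : (0:ℝ) ≤ ∑ i, (M - x i) := Finset.sum_nonneg fun i _ => hδ i
  -- M - g = (∑ e^{τx_i}(M - x_i)) / S
  have hrepr : M - gval x τ
      = (∑ i, Real.exp (τ * x i) * (M - x i)) / (∑ i, Real.exp (τ * x i)) := by
    rw [gval, eq_div_iff hS.ne', sub_mul, div_mul_cancel₀ _ hS.ne',
      Finset.mul_sum]
    rw [← Finset.sum_sub_distrib]
    congr 1; ext i; ring
  rw [hrepr, div_le_iff₀ hS]
  -- exists index achieving max
  obtain ⟨j, _, hj⟩ := Finset.exists_mem_eq_sup' ⟨⟨0, hm⟩, Finset.mem_univ _⟩ x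
  have hMS : Real.exp (τ * M) ≤ ∑ i, Real.exp (τ * x i) := by
    have h2 := Finset.single_le_sum (f := fun i => Real.exp (τ * x i))
      (fun i _ => (Real.exp_pos _).le) (Finset.mem_univ j)
    have hMj : M = x j := by rw [hM]; unfold maxVal; rw [hj]
    rw [hMj]; exact h2
  have hterm : ∀ i, Real.exp (τ * x i) * (M - x i)
      ≤ Real.exp (-(τ * c)) * Real.exp (τ * M) * (M - x i) := by
    intro i
    rcases hgap i with h | h
    · rw [h]; simp
    · apply mul_le_mul_of_nonneg_right _ (hδ i)
      rw [← Real.exp_add, Real.exp_le_exp]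
      nlinarith [mul_le_mul_of_nonneg_left h hτ]
  calc ∑ i, Real.exp (τ * x i) * (M - x i)
      ≤ ∑ i, Real.exp (-(τ * c)) * Real.exp (τ * M) * (M - x i) :=
        Finset.sum_le_sum fun i _ => hterm i
    _ = Real.exp (-(τ * c)) * Real.exp (τ * M) * ∑ i, (M - x i) := by
        rw [← Finset.mul_sum]
    _ ≤ Real.exp (-(τ * c)) * (∑ i, Real.exp (τ * x i)) * ∑ i, (M - x i) := by
        apply mul_le_mul_of_nonneg_right _ hsumδ
        exact mul_le_mul_of_nonneg_left hMS (Real.exp_pos _).le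
    _ = (Real.exp (-(τ * c)) * ∑ i, (M - x i)) * ∑ i, Real.exp (τ * x i) := by
        ring
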